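/- The recursive row-expansion algorithm on a 0/1 matrix M with rows r₁,…,r_m and columns 1,…,n, which maintains a set S and at row i either proceeds (if some column in S has a 1 in row i) or branches over all columns k with M[i,k] = 1 adding k to S, outputs exactly those sets S (up to the sets it accumulates along its branches) such that every row of M has a 1 in some column of S; in particular every output S is a hitting set of the rows, and every minimal hitting set occurs among the outputs. -/

import Mathlib

/-- Algorithm 3.3 (recursive subset enumeration via row expansion): rows are given
as the sets of columns holding a `1`; at each row, if the current selection `S`
already hits the row we proceed, otherwise we branch over all columns with a `1`. -/
noncomputable def rowExpand {n : ℕ} : List (Finset (Fin n)) → Finset (Fin n) → List (Finset (Fin n))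
  | [], S => [S]
  | r :: rest, S =>
      if (r ∩ S).Nonempty then rowExpand rest S
      else (r.toList.map fun k => rowExpand rest (insert k S)).flatten

lemma rowExpand_sound {n : ℕ} : ∀ (rows : List (Finset (Fin n))) (S S' : Finset (Fin n)),
    S' ∈ rowExpand rows S → S ⊆ S' ∧ ∀ r ∈ rows, (r ∩ S').Nonempty
  | [], S, S', h => by
      simp [rowExpand] at h; subst h; simp
  | r :: rest, S, S', h => by
      rw [rowExpand] at h
      split_ifs at h with hc
      · obtain ⟨hSS, hall⟩ := rowExpand_sound rest S S' h
        refine ⟨hSS, ?_⟩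
        intro r' hr'
        rcases List.mem_cons.1 hr' with rfl | hr'
        · obtain ⟨x, hx⟩ := hc
          exact ⟨x, Finset.mem_inter.2 ⟨(Finset.mem_inter.1 hx).1, hSS (Finset.mem_inter.1 hx).2⟩⟩
        · exact hall r' hr'
      · simp only [List.mem_flatten, List.mem_map] at h
        obtain ⟨l, ⟨k, hk, rfl⟩, hS'⟩ := h
        obtain ⟨hSS, hall⟩ := rowExpand_sound rest (insert k S) S' hS'
        refine ⟨fun x hx => hSS (Finset.mem_insert_of_mem hx), ?_⟩
        intro r' hr'
        rcases List.mem_cons.1 hr' with rfl | hr'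
        · exact ⟨k, Finset.mem_inter.2 ⟨Finset.mem_toList.1 hk, hSS (Finset.mem_insert_self k S)⟩⟩
        · exact hall r' hr'

lemma rowExpand_complete {n : ℕ} : ∀ (rows : List (Finset (Fin n))) (S T : Finset (Fin n)),
    S ⊆ T → (∀ r ∈ rows, (r ∩ T).Nonempty) →
    (∀ x ∈ T, x ∉ S → ∃ r ∈ rows, r ∩ T = {x}) →
    T ∈ rowExpand rows S
  | [], S, T, hST, _, hmin => by
      have : T = S := by
        apply Finset.Subset.antisymm _ hST
        intro x hx
        by_contra hxS
        obtain ⟨r, hr, _⟩ := hmin x hx hxS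
        exact absurd hr List.not_mem_nil
      simp [rowExpand, this]
  | r :: rest, S, T, hST, hhit, hmin => by
      rw [rowExpand]
      split_ifs with hc
      · refine rowExpand_complete rest S T hST (fun r' hr' => hhit r' (List.mem_cons_of_mem _ hr')) ?_
        intro x hx hxS
        obtain ⟨r', hr', heq⟩ := hmin x hx hxS
        rcases List.mem_cons.1 hr' with rfl | hr'
        · exfalso
          obtain ⟨y, hy⟩ := hc
          have : y ∈ r' ∩ T :=
            Finset.mem_inter.2 ⟨(Finset.mem_inter.1 hy).1, hST (Finset.mem_inter.1 hy).2⟩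
          rw [heq, Finset.mem_singleton] at this
          subst this
          exact hxS (Finset.mem_inter.1 hy).2
        · exact ⟨r', hr', heq⟩
      · obtain ⟨k, hk⟩ := hhit r List.mem_cons_self
        obtain ⟨hkr, hkT⟩ := Finset.mem_inter.1 hk
        have hmem : T ∈ rowExpand rest (insert k S) := by
          refine rowExpand_complete rest (insert k S) T (Finset.insert_subset hkT hST)
            (fun r' hr' => hhit r' (List.mem_cons_of_mem _ hr')) ?_
          intro x hx hxS
          obtain ⟨r', hr', heq⟩ := hmin x hx (fun h => hxS (Finset.mem_insert_of_mem h))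
          rcases List.mem_cons.1 hr' with rfl | hr'
          · exfalso
            have : k ∈ ({x} : Finset (Fin n)) := heq ▸ hk
            rw [Finset.mem_singleton] at this
            exact hxS (this ▸ Finset.mem_insert_self k S)
          · exact ⟨r', hr', heq⟩
        simp only [List.mem_flatten, List.mem_map]
        exact ⟨rowExpand rest (insert k S), ⟨k, Finset.mem_toList.2 hkr, rfl⟩, hmem⟩

theorem stmt_10 (m n : ℕ) (M : Fin m → Fin n → Bool) :
    -- soundness: every output is a hitting set of the rows of `M`
    (∀ S ∈ rowExpand ((List.finRange m).map fun i => Finset.univ.filter fun k => M i k = true) ∅,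
        ∀ i, ∃ k ∈ S, M i k = true) ∧
    -- completeness: every inclusion-minimal hitting set occurs among the outputs
    (∀ T : Finset (Fin n), (∀ i, ∃ k ∈ T, M i k = true) →
        (∀ T' ⊂ T, ¬ ∀ i, ∃ k ∈ T', M i k = true) →
        T ∈ rowExpand ((List.finRange m).map fun i => Finset.univ.filter fun k => M i k = true) ∅) := by
  constructor
  · intro S hS i
    obtain ⟨-, hall⟩ := rowExpand_sound _ _ _ hS
    have : ((Finset.univ.filter fun k => M i k = true) ∩ S).Nonempty := by
      apply hall
      simp [List.mem_map]
    obtain ⟨k, hk⟩ := this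
    rw [Finset.mem_inter, Finset.mem_filter] at hk
    exact ⟨k, hk.2, hk.1.2⟩
  · intro T hhit hmin
    apply rowExpand_complete
    · exact Finset.empty_subset T
    · intro r hr
      simp only [List.mem_map, List.mem_finRange, true_and] at hr
      obtain ⟨i, rfl⟩ := hr
      obtain ⟨k, hkT, hM⟩ := hhit i
      exact ⟨k, Finset.mem_inter.2 ⟨Finset.mem_filter.2 ⟨Finset.mem_univ k, hM⟩, hkT⟩⟩
    · intro x hx _
      have hsub : T.erase x ⊂ T := Finset.erase_ssubset hx
      have := hmin _ hsub
      push_neg at this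
      obtain ⟨i, hi⟩ := this
      refine ⟨Finset.univ.filter fun k => M i k = true, by simp [List.mem_map], ?_⟩
      ext y
      simp only [Finset.mem_inter, Finset.mem_filter, Finset.mem_univ, true_and,
        Finset.mem_singleton]
      constructor
      · rintro ⟨hMy, hyT⟩
        by_contra hne
        exact absurd hMy (by simpa using hi y (Finset.mem_erase.2 ⟨hne, hyT⟩))
      · rintro rfl
        obtain ⟨k, hkT, hMk⟩ := hhit i
        have hkx : k = y := by
          by_contra hne
          exact absurd hMk (by simpa using hi k (Finset.mem_erase.2 ⟨hne, hkT⟩))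
        exact ⟨hkx ▸ hMk, hkx ▸ hkT⟩
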